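/- arXiv:0906.1651 — 2 statements merged into one kernel-verified Lean document; each statement's English description precedes it below -/
import Mathlib

section
/- Let ν_β be the generalized Cauchy distribution on ℝⁿ with parameter β > n/2, and suppose C(β, n) is a constant such that Var_{ν_β}(g) ≤ C(β, n) ∫ |∇g(x)|² (1 + |x|²) dν_β(x) holds for all bounded smooth functions g on ℝⁿ. Then C(β, n) ≥ (β + 2) / (4β(β − n/2 + 1)) ≥ 1/(4β). In particular, testing with g(x) = 1/(1 + |x|²) gives Var_{ν_β}(g) = (β − n/2)(n/2) / (β²(β + 1)) and ∫ |∇g(x)|² (1 + |x|²) dν_β(x) = 4(β − n/2)(β − n/2 + 1)(n/2) / (β(β + 1)(β + 2)). -/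
open MeasureTheory Real
open scoped ENNReal

section Aux
open Set Filter Topology

private lemma oneDim_integrable' {m : ℕ} {b : ℝ} (hb : ((m : ℝ) + 1) / 2 < b) :
    IntegrableOn (fun r : ℝ => r ^ m * (1 + r ^ 2) ^ (-b)) (Ioi 0) := by
  have hb0 : 0 < b := lt_of_le_of_lt (by positivity) hb
  have h1 : IntegrableOn (fun r : ℝ => r ^ m * (1 + r ^ 2) ^ (-b)) (Ioc 0 1) := by
    apply (ContinuousOn.integrableOn_compact isCompact_Icc ?_).mono_set Ioc_subset_Icc_self
    apply ContinuousOn.mul (by fun_prop)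
    apply ContinuousOn.rpow_const (by fun_prop)
    intro x _
    left; positivity
  have h2 : IntegrableOn (fun r : ℝ => r ^ m * (1 + r ^ 2) ^ (-b)) (Ioi 1) := by
    have hint : IntegrableOn (fun r : ℝ => r ^ ((m : ℝ) - 2 * b)) (Ioi 1) := by
      apply integrableOn_Ioi_rpow_of_lt (by linarith) one_pos
    have hcont : Continuous fun r : ℝ => r ^ m * (1 + r ^ 2) ^ (-b) :=
      (continuous_pow m).mul ((continuous_const.add (continuous_pow 2)).rpow_const
        (fun x => Or.inl (by simp only [Pi.add_apply]; positivity)))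
    apply hint.mono' hcont.aestronglyMeasurable.restrict
    filter_upwards [ae_restrict_mem measurableSet_Ioi] with r hr
    have hr1 : (1 : ℝ) < r := hr
    have hr0 : (0 : ℝ) < r := by linarith
    have hpos : (0:ℝ) < 1 + r ^ 2 := by positivity
    rw [Real.norm_eq_abs, abs_of_nonneg (by positivity)]
    have key : (1 + r ^ 2) ^ (-b) ≤ (r ^ 2) ^ (-b) := by
      apply Real.rpow_le_rpow_of_nonpos (by positivity) (by linarith) (by linarith)
    calc r ^ m * (1 + r ^ 2) ^ (-b) ≤ r ^ m * (r ^ 2) ^ (-b) := by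
          apply mul_le_mul_of_nonneg_left key (by positivity)
      _ = r ^ ((m : ℝ) - 2 * b) := by
          rw [← Real.rpow_natCast r m, ← Real.rpow_natCast r 2, ← Real.rpow_mul hr0.le,
            ← Real.rpow_add hr0]
          norm_num
          ring_nf
  have := h1.union h2
  rwa [Ioc_union_Ioi_eq_Ioi (zero_le_one)] at this

set_option maxHeartbeats 1000000 in
private lemma oneDim_step' {n : ℕ} (hn : 0 < n) {b : ℝ} (hb : (n : ℝ) / 2 < b) :
    ∫ r in Ioi (0:ℝ), r ^ (n - 1) * (1 + r ^ 2) ^ (-(b + 1)) =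
      ((b - n / 2) / b) * ∫ r in Ioi (0:ℝ), r ^ (n - 1) * (1 + r ^ 2) ^ (-b) := by
  have hb0 : 0 < b := lt_of_le_of_lt (by positivity) hb
  have hcast : ((n - 1 : ℕ) : ℝ) = (n : ℝ) - 1 := by
    rw [Nat.cast_sub hn]; norm_num
  have hJ : IntegrableOn (fun r : ℝ => r ^ (n - 1) * (1 + r ^ 2) ^ (-b)) (Ioi 0) := by
    apply oneDim_integrable'; rw [hcast]; linarith
  have hJ' : IntegrableOn (fun r : ℝ => r ^ (n - 1) * (1 + r ^ 2) ^ (-(b + 1))) (Ioi 0) := by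
    apply oneDim_integrable'; rw [hcast]; linarith
  have hK : IntegrableOn (fun r : ℝ => r ^ (n + 1) * (1 + r ^ 2) ^ (-(b + 1))) (Ioi 0) := by
    apply oneDim_integrable'; push_cast; linarith
  have hderiv : ∀ r : ℝ, HasDerivAt (fun r : ℝ => r ^ n * (1 + r ^ 2) ^ (-b))
      ((n : ℝ) * (r ^ (n - 1) * (1 + r ^ 2) ^ (-b)) -
        2 * b * (r ^ (n + 1) * (1 + r ^ 2) ^ (-(b + 1)))) r := by
    intro r
    have hpos : (0:ℝ) < 1 + r ^ 2 := by positivity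
    have h1 : HasDerivAt (fun r : ℝ => r ^ n) ((n : ℝ) * r ^ (n - 1)) r := hasDerivAt_pow n r
    have h2 : HasDerivAt (fun r : ℝ => (1 + r ^ 2) ^ (-b))
        (((2 : ℕ) : ℝ) * r ^ (2 - 1) * (-b) * (1 + r ^ 2) ^ (-b - 1)) r :=
      ((hasDerivAt_pow 2 r).const_add 1).rpow_const (Or.inl hpos.ne')
    refine (h1.mul h2).congr_deriv ?_
    have e1 : (1 + r ^ 2) ^ (-b - 1) = (1 + r ^ 2) ^ (-(b + 1)) := by ring_nf
    have e2 : r ^ (n + 1) = r ^ n * r := pow_succ r n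
    rw [e1, e2]
    push_cast
    ring
  have htend : Tendsto (fun r : ℝ => r ^ n * (1 + r ^ 2) ^ (-b)) atTop (𝓝 0) := by
    have hlim : Tendsto (fun r : ℝ => r ^ (-(2 * b - (n : ℝ)))) atTop (𝓝 0) :=
      tendsto_rpow_neg_atTop (by linarith)
    apply squeeze_zero' (f := fun r : ℝ => r ^ n * (1 + r ^ 2) ^ (-b))
      (g := fun r : ℝ => r ^ (-(2 * b - (n : ℝ)))) ?_ ?_ hlim
    · filter_upwards [eventually_ge_atTop (1:ℝ)] with r hr
      have : (0:ℝ) < r := by linarith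
      positivity
    · filter_upwards [eventually_ge_atTop (1:ℝ)] with r hr
      have hr0 : (0:ℝ) < r := by linarith
      have key : (1 + r ^ 2) ^ (-b) ≤ (r ^ 2) ^ (-b) :=
        Real.rpow_le_rpow_of_nonpos (by positivity) (by linarith) (by linarith)
      calc r ^ n * (1 + r ^ 2) ^ (-b) ≤ r ^ n * (r ^ 2) ^ (-b) :=
            mul_le_mul_of_nonneg_left key (by positivity)
        _ = r ^ (-(2 * b - (n : ℝ))) := by
            rw [← Real.rpow_natCast r n, ← Real.rpow_natCast r 2, ← Real.rpow_mul hr0.le,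
              ← Real.rpow_add hr0]
            norm_num; ring_nf
  have hF'int : IntegrableOn (fun r : ℝ =>
      (n : ℝ) * (r ^ (n - 1) * (1 + r ^ 2) ^ (-b)) -
        2 * b * (r ^ (n + 1) * (1 + r ^ 2) ^ (-(b + 1)))) (Ioi 0) :=
    ((hJ.const_mul _).sub (hK.const_mul _))
  have hFTC : ∫ r in Ioi (0:ℝ),
      ((n : ℝ) * (r ^ (n - 1) * (1 + r ^ 2) ^ (-b)) -
        2 * b * (r ^ (n + 1) * (1 + r ^ 2) ^ (-(b + 1)))) =
      0 - (0 : ℝ) ^ n * (1 + (0:ℝ) ^ 2) ^ (-b) :=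
    integral_Ioi_of_hasDerivAt_of_tendsto' (fun x _ => hderiv x) hF'int htend
  rw [zero_pow hn.ne', zero_mul, sub_zero] at hFTC
  rw [integral_sub (hJ.const_mul _) (hK.const_mul _), integral_const_mul,
    integral_const_mul] at hFTC
  have hKval : ∫ r in Ioi (0:ℝ), r ^ (n + 1) * (1 + r ^ 2) ^ (-(b + 1)) =
      (∫ r in Ioi (0:ℝ), r ^ (n - 1) * (1 + r ^ 2) ^ (-b)) -
        ∫ r in Ioi (0:ℝ), r ^ (n - 1) * (1 + r ^ 2) ^ (-(b + 1)) := by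
    rw [← integral_sub hJ hJ']
    apply setIntegral_congr_fun measurableSet_Ioi
    intro r hr
    have hr0 : (0:ℝ) < r := hr
    have hpos : (0:ℝ) < 1 + r ^ 2 := by positivity
    show r ^ (n + 1) * (1 + r ^ 2) ^ (-(b + 1)) =
      r ^ (n - 1) * (1 + r ^ 2) ^ (-b) - r ^ (n - 1) * (1 + r ^ 2) ^ (-(b + 1))
    have e1 : (1 + r ^ 2) ^ (-b) = (1 + r ^ 2) * (1 + r ^ 2) ^ (-(b + 1)) := by
      nth_rewrite 2 [show (1 + r ^ 2) = (1 + r ^ 2) ^ (1:ℝ) from (Real.rpow_one _).symm]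
      rw [← Real.rpow_add hpos]
      ring_nf
    have e2 : r ^ (n + 1) = r ^ (n - 1) * r ^ 2 := by
      rw [← pow_add]; congr 1; omega
    rw [e1, e2]
    ring
  rw [hKval] at hFTC
  have hbne : b ≠ 0 := hb0.ne'
  set J' := ∫ r in Ioi (0:ℝ), r ^ (n - 1) * (1 + r ^ 2) ^ (-(b + 1)) with hJ'd
  set Jv := ∫ r in Ioi (0:ℝ), r ^ (n - 1) * (1 + r ^ 2) ^ (-b) with hJd
  clear_value J' Jv
  have h2 : b * J' = (b - n / 2) * Jv := by linear_combination ((1:ℝ)/2) * hFTC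
  rw [div_mul_eq_mul_div, eq_div_iff hbne]
  linear_combination h2

private lemma nDim_integrable' {n : ℕ} {b : ℝ} (hb : (n : ℝ) / 2 < b) :
    Integrable (fun x : EuclideanSpace ℝ (Fin n) => (1 + ‖x‖ ^ 2) ^ (-b)) := by
  have h := integrable_rpow_neg_one_add_norm_sq (E := EuclideanSpace ℝ (Fin n))
    (μ := volume) (r := 2 * b)
    (by rw [finrank_euclideanSpace_fin]; linarith)
  have e : ∀ x : EuclideanSpace ℝ (Fin n),
      ((1 : ℝ) + ‖x‖ ^ 2) ^ (-(2 * b) / 2) = (1 + ‖x‖ ^ 2) ^ (-b) := by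
    intro x; congr 1; ring
  simpa only [e] using h

private lemma nDim_pos' {n : ℕ} {b : ℝ} (hb : (n : ℝ) / 2 < b) :
    0 < ∫ x : EuclideanSpace ℝ (Fin n), (1 + ‖x‖ ^ 2) ^ (-b) := by
  rw [integral_pos_iff_support_of_nonneg (fun x => by positivity) (nDim_integrable' hb)]
  have hsupp : Function.support (fun x : EuclideanSpace ℝ (Fin n) => (1 + ‖x‖ ^ 2) ^ (-b)) =
      Set.univ := by
    ext x; simp only [Function.mem_support, Set.mem_univ, iff_true]
    positivity
  rw [hsupp]
  exact isOpen_univ.measure_pos volume ⟨0, trivial⟩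

private lemma nDim_step' {n : ℕ} (hn : 0 < n) {b : ℝ} (hb : (n : ℝ) / 2 < b) :
    ∫ x : EuclideanSpace ℝ (Fin n), (1 + ‖x‖ ^ 2) ^ (-(b + 1)) =
      ((b - n / 2) / b) * ∫ x : EuclideanSpace ℝ (Fin n), (1 + ‖x‖ ^ 2) ^ (-b) := by
  haveI : Nonempty (Fin n) := ⟨⟨0, hn⟩⟩
  haveI : Nontrivial (EuclideanSpace ℝ (Fin n)) := inferInstance
  have hdim : Module.finrank ℝ (EuclideanSpace ℝ (Fin n)) = n := finrank_euclideanSpace_fin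
  have h1 := MeasureTheory.integral_fun_norm_addHaar (volume : Measure (EuclideanSpace ℝ (Fin n)))
    (fun r : ℝ => (1 + r ^ 2) ^ (-(b + 1)))
  have h2 := MeasureTheory.integral_fun_norm_addHaar (volume : Measure (EuclideanSpace ℝ (Fin n)))
    (fun r : ℝ => (1 + r ^ 2) ^ (-b))
  rw [hdim] at h1 h2
  simp only [smul_eq_mul, nsmul_eq_mul] at h1 h2
  rw [h1, h2, oneDim_step' hn hb]
  ring

private lemma aux_pt (s : ℝ) (hs : 0 ≤ s) (β : ℝ) (m : ℕ) :
    (1 + s) ^ (-β) * (1 / (1 + s)) ^ m = (1 + s) ^ (-(β + m)) := by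
  have h : (0:ℝ) < 1 + s := by linarith
  rw [one_div, inv_pow, ← Real.rpow_natCast (1 + s) m, ← Real.rpow_neg h.le,
    ← Real.rpow_add h]
  congr 1; ring

end Aux

/-- The generalized Cauchy distribution `ν_β` on `ℝⁿ`, i.e. the probability measure with
density `(1/Z)(1 + |x|²)^{−β}`, where `Z` is the normalizing constant. -/
noncomputable def cauchyMeasure (n : ℕ) (β : ℝ) : Measure (EuclideanSpace ℝ (Fin n)) :=
  volume.withDensity fun x =>
    ENNReal.ofReal
      ((1 + ‖x‖ ^ 2) ^ (-β) / ∫ y : EuclideanSpace ℝ (Fin n), (1 + ‖y‖ ^ 2) ^ (-β))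

private lemma cauchy_integral_eq {n : ℕ} (β : ℝ) (f : EuclideanSpace ℝ (Fin n) → ℝ) :
    ∫ x, f x ∂(cauchyMeasure n β) =
      ∫ x : EuclideanSpace ℝ (Fin n),
        ((1 + ‖x‖ ^ 2) ^ (-β) / ∫ y : EuclideanSpace ℝ (Fin n), (1 + ‖y‖ ^ 2) ^ (-β)) * f x := by
  set Z := ∫ y : EuclideanSpace ℝ (Fin n), (1 + ‖y‖ ^ 2) ^ (-β) with hZ
  have hZ0 : 0 ≤ Z := integral_nonneg fun y => by positivity
  have hd0 : ∀ x : EuclideanSpace ℝ (Fin n), 0 ≤ (1 + ‖x‖ ^ 2) ^ (-β) / Z := fun x =>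
    div_nonneg (by positivity) hZ0
  have hd : Measurable fun x : EuclideanSpace ℝ (Fin n) =>
      Real.toNNReal ((1 + ‖x‖ ^ 2) ^ (-β) / Z) := by
    apply Measurable.real_toNNReal
    apply Measurable.div ?_ measurable_const
    exact ((continuous_const.add (continuous_norm.pow 2)).rpow_const
      (fun x => Or.inl (by simp only [Pi.add_apply, Pi.pow_apply]; positivity))).measurable
  rw [cauchyMeasure]
  simp only [ENNReal.ofReal]
  rw [integral_withDensity_eq_integral_smul hd f]
  refine integral_congr_ae (Filter.Eventually.of_forall fun x => ?_)
  simp only [NNReal.smul_def, Real.coe_toNNReal _ (hd0 x), smul_eq_mul]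

private lemma gradient_inv_one_add_norm_sq {n : ℕ} (x : EuclideanSpace ℝ (Fin n)) :
    gradient (fun y : EuclideanSpace ℝ (Fin n) => 1 / (1 + ‖y‖ ^ 2)) x =
      (-(2 / (1 + ‖x‖ ^ 2) ^ 2)) • x := by
  apply HasGradientAt.gradient
  rw [hasGradientAt_iff_hasFDerivAt]
  have hpos : (0:ℝ) < 1 + ‖x‖ ^ 2 := by positivity
  have hh : HasFDerivAt (fun y : EuclideanSpace ℝ (Fin n) => 1 + ‖y‖ ^ 2)
      (2 • (innerSL ℝ x)) x := (hasStrictFDerivAt_norm_sq x).hasFDerivAt.const_add 1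
  have hinv : HasDerivAt (fun t : ℝ => 1 / t) (-((1 + ‖x‖ ^ 2) ^ 2)⁻¹) (1 + ‖x‖ ^ 2) := by
    simpa using hasDerivAt_inv hpos.ne'
  have hcomp := hinv.comp_hasFDerivAt x hh
  refine hcomp.congr_fderiv ?_
  apply ContinuousLinearMap.ext
  intro y
  simp only [InnerProductSpace.toDual_apply_apply, ContinuousLinearMap.smul_apply,
    innerSL_apply_apply, real_inner_smul_left, nsmul_eq_mul, smul_eq_mul]
  field_simp
  push_cast
  ring

set_option maxHeartbeats 2000000

/-- **Optimality of the constant in the weighted Poincaré inequality for `ν_β`**: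
if `Var_{ν_β}(g) ≤ C(β,n) ∫ |∇g|²(1+|x|²) dν_β` for all bounded smooth `g`, then
`C(β,n) ≥ (β+2)/(4β(β−n/2+1)) ≥ 1/(4β)`; moreover for the test function
`g(x) = 1/(1+|x|²)` one has `Var_{ν_β}(g) = (β−n/2)(n/2)/(β²(β+1))` and
`∫ |∇g|²(1+|x|²) dν_β = 4(β−n/2)(β−n/2+1)(n/2)/(β(β+1)(β+2))`. -/
theorem weighted_poincare_cauchy_constant_lower_bound
    {n : ℕ} (hn : 0 < n) (β : ℝ) (hβ : (n : ℝ) / 2 < β) (C : ℝ)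
    (hC : ∀ g : EuclideanSpace ℝ (Fin n) → ℝ,
      ContDiff ℝ (⊤ : ℕ∞) g → (∃ M, ∀ x, |g x| ≤ M) →
      (∫ x, g x ^ 2 ∂cauchyMeasure n β) - (∫ x, g x ∂cauchyMeasure n β) ^ 2 ≤
        C * ∫ x, ‖gradient g x‖ ^ 2 * (1 + ‖x‖ ^ 2) ∂cauchyMeasure n β) :
    ((β + 2) / (4 * β * (β - n / 2 + 1)) ≤ C ∧
      1 / (4 * β) ≤ (β + 2) / (4 * β * (β - n / 2 + 1))) ∧
    (∫ x, (1 / (1 + ‖x‖ ^ 2)) ^ 2 ∂cauchyMeasure n β) -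
        (∫ x, 1 / (1 + ‖x‖ ^ 2) ∂cauchyMeasure n β) ^ 2 =
      (β - n / 2) * (n / 2) / (β ^ 2 * (β + 1)) ∧
    ∫ x, ‖gradient (fun y : EuclideanSpace ℝ (Fin n) => 1 / (1 + ‖y‖ ^ 2)) x‖ ^ 2 *
        (1 + ‖x‖ ^ 2) ∂cauchyMeasure n β =
      4 * (β - n / 2) * (β - n / 2 + 1) * (n / 2) / (β * (β + 1) * (β + 2)) := by
  have hn' : (0:ℝ) < n := Nat.cast_pos.mpr hn
  have hβ0 : 0 < β := lt_trans (by positivity) hβ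
  set Z := ∫ y : EuclideanSpace ℝ (Fin n), (1 + ‖y‖ ^ 2) ^ (-β) with hZdef
  have hZpos : 0 < Z := nDim_pos' hβ
  -- the three step relations
  have h1 : ∫ x : EuclideanSpace ℝ (Fin n), (1 + ‖x‖ ^ 2) ^ (-(β + 1)) = ((β - n / 2) / β) * Z :=
    nDim_step' hn hβ
  have h2 : ∫ x : EuclideanSpace ℝ (Fin n), (1 + ‖x‖ ^ 2) ^ (-(β + 2)) =
      ((β + 1 - n / 2) / (β + 1)) * (((β - n / 2) / β) * Z) := by
    have := nDim_step' hn (b := β + 1) (by linarith)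
    rw [show -(β + 1 + 1) = -(β + 2) by ring] at this
    rw [this, h1]
  have h3 : ∫ x : EuclideanSpace ℝ (Fin n), (1 + ‖x‖ ^ 2) ^ (-(β + 3)) =
      ((β + 2 - n / 2) / (β + 2)) *
        (((β + 1 - n / 2) / (β + 1)) * (((β - n / 2) / β) * Z)) := by
    have := nDim_step' hn (b := β + 2) (by linarith)
    rw [show -(β + 2 + 1) = -(β + 3) by ring] at this
    rw [this, h2]
  -- first moment
  have A1 : ∫ x, 1 / (1 + ‖x‖ ^ 2) ∂cauchyMeasure n β = (β - n / 2) / β := by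
    rw [cauchy_integral_eq]
    have hpt : ∀ x : EuclideanSpace ℝ (Fin n), ((1 + ‖x‖ ^ 2) ^ (-β) / Z) * (1 / (1 + ‖x‖ ^ 2)) =
        (1 + ‖x‖ ^ 2) ^ (-(β + 1)) / Z := by
      intro x
      have h := aux_pt (‖x‖ ^ 2) (by positivity) β 1
      push_cast at h
      rw [pow_one] at h
      rw [div_mul_eq_mul_div, h]
    rw [integral_congr_ae (Filter.Eventually.of_forall hpt), integral_div, h1]
    field_simp
  -- second moment
  have A2 : ∫ x, (1 / (1 + ‖x‖ ^ 2)) ^ 2 ∂cauchyMeasure n β =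
      ((β + 1 - n / 2) / (β + 1)) * ((β - n / 2) / β) := by
    rw [cauchy_integral_eq]
    have hpt : ∀ x : EuclideanSpace ℝ (Fin n), ((1 + ‖x‖ ^ 2) ^ (-β) / Z) * ((1 / (1 + ‖x‖ ^ 2)) ^ 2) =
        (1 + ‖x‖ ^ 2) ^ (-(β + 2)) / Z := by
      intro x
      have h := aux_pt (‖x‖ ^ 2) (by positivity) β 2
      push_cast at h
      rw [div_mul_eq_mul_div, h]
    rw [integral_congr_ae (Filter.Eventually.of_forall hpt), integral_div, h2]
    field_simp
  -- gradient integral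
  have A3 : ∫ x, ‖gradient (fun y : EuclideanSpace ℝ (Fin n) => 1 / (1 + ‖y‖ ^ 2)) x‖ ^ 2 *
        (1 + ‖x‖ ^ 2) ∂cauchyMeasure n β =
      4 * (β - n / 2) * (β - n / 2 + 1) * (n / 2) / (β * (β + 1) * (β + 2)) := by
    rw [cauchy_integral_eq]
    have hpt : ∀ x : EuclideanSpace ℝ (Fin n), ((1 + ‖x‖ ^ 2) ^ (-β) / Z) *
          (‖gradient (fun y : EuclideanSpace ℝ (Fin n) => 1 / (1 + ‖y‖ ^ 2)) x‖ ^ 2 * (1 + ‖x‖ ^ 2)) =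
        (4 * (1 + ‖x‖ ^ 2) ^ (-(β + 2)) - 4 * (1 + ‖x‖ ^ 2) ^ (-(β + 3))) / Z := by
      intro x
      have hs : (0:ℝ) < 1 + ‖x‖ ^ 2 := by positivity
      rw [gradient_inv_one_add_norm_sq, norm_smul, Real.norm_eq_abs, abs_neg,
        abs_of_nonneg (by positivity)]
      have e2 : (1 + ‖x‖ ^ 2) ^ (-(β + 2)) = (1 + ‖x‖ ^ 2) ^ (-β) * (1/(1 + ‖x‖ ^ 2))^2 := by
        have h := aux_pt (‖x‖ ^ 2) (by positivity) β 2
        push_cast at h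
        exact h.symm
      have e3 : (1 + ‖x‖ ^ 2) ^ (-(β + 3)) = (1 + ‖x‖ ^ 2) ^ (-β) * (1/(1 + ‖x‖ ^ 2))^3 := by
        have h := aux_pt (‖x‖ ^ 2) (by positivity) β 3
        push_cast at h
        exact h.symm
      rw [e2, e3]
      field_simp
      ring
    rw [integral_congr_ae (Filter.Eventually.of_forall hpt), integral_div]
    rw [integral_sub ((nDim_integrable' (n := n) (b := β + 2) (by linarith)).const_mul 4)
      ((nDim_integrable' (n := n) (b := β + 3) (by linarith)).const_mul 4),
      integral_const_mul, integral_const_mul, h2, h3]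
    have hne1 : β + 1 ≠ 0 := by positivity
    have hne2 : β + 2 ≠ 0 := by positivity
    field_simp
    ring
  -- variance
  have AV : (∫ x, (1 / (1 + ‖x‖ ^ 2)) ^ 2 ∂cauchyMeasure n β) -
      (∫ x, 1 / (1 + ‖x‖ ^ 2) ∂cauchyMeasure n β) ^ 2 =
      (β - n / 2) * (n / 2) / (β ^ 2 * (β + 1)) := by
    rw [A1, A2]
    have hne1 : β + 1 ≠ 0 := by positivity
    field_simp
    ring
  refine ⟨⟨?_, ?_⟩, AV, A3⟩
  · -- apply hC to g
    have hg : ContDiff ℝ (⊤ : ℕ∞) (fun y : EuclideanSpace ℝ (Fin n) => 1 / (1 + ‖y‖ ^ 2)) := by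
      apply ContDiff.div contDiff_const
      · exact contDiff_const.add (contDiff_norm_sq ℝ)
      · intro x; positivity
    have hbd : ∃ M, ∀ x : EuclideanSpace ℝ (Fin n), |1 / (1 + ‖x‖ ^ 2)| ≤ M := by
      refine ⟨1, fun x => ?_⟩
      rw [abs_of_nonneg (by positivity)]
      rw [div_le_one (by positivity)]
      nlinarith [sq_nonneg ‖x‖]
    have key := hC (fun y : EuclideanSpace ℝ (Fin n) => 1 / (1 + ‖y‖ ^ 2)) hg hbd
    rw [AV, A3] at key
    have hRpos : 0 < 4 * (β - n / 2) * (β - n / 2 + 1) * (n / 2) / (β * (β + 1) * (β + 2)) := by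
      have hb1 : 0 < β - n / 2 := by linarith
      have hb2 : (0:ℝ) < β - n / 2 + 1 := by linarith
      have hb3 : (0:ℝ) < (n:ℝ) / 2 := by linarith
      apply div_pos
      · exact mul_pos (mul_pos (mul_pos four_pos hb1) hb2) hb3
      · exact mul_pos (mul_pos hβ0 (by linarith)) (by linarith)
    have hVeq : (β - n / 2) * (n / 2) / (β ^ 2 * (β + 1)) =
        ((β + 2) / (4 * β * (β - n / 2 + 1))) *
          (4 * (β - n / 2) * (β - n / 2 + 1) * (n / 2) / (β * (β + 1) * (β + 2))) := by
      have hβne : β ≠ 0 := hβ0.ne'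
      have hne1 : β + 1 ≠ 0 := by positivity
      have hne2 : β + 2 ≠ 0 := by positivity
      have hne3 : β - n / 2 + 1 ≠ 0 := by nlinarith
      rw [div_mul_div_comm, div_eq_div_iff (by positivity)
        (mul_ne_zero (mul_ne_zero (mul_ne_zero (by norm_num) hβne) hne3)
          (mul_ne_zero (mul_ne_zero hβne hne1) hne2))]
      ring
    rw [hVeq] at key
    exact le_of_mul_le_mul_right key hRpos
  · -- elementary inequality
    have hden1 : (0:ℝ) < 4 * β := by linarith
    have hden2 : (0:ℝ) < 4 * β * (β - n / 2 + 1) := by nlinarith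
    rw [div_le_div_iff₀ hden1 hden2]
    nlinarith
end

section
/- Let μ be a probability measure on ℝⁿ satisfying, for some constants a > 0 and b ∈ [0, 1), the weighted inequality ∫ |g − m|² dμ ≤ ∫ |∇g(x)|² (a + b|x|²) dμ(x) for all smooth g on ℝⁿ, where m is a μ-median of g. Then for any smooth g on ℝⁿ, inf_{c ∈ ℝ} ∫ |g(x) − c|² / (a + b|x|²) dμ(x) ≤ (1/(1 − √b)²) ∫ |∇g|² dμ. -/
open MeasureTheory Real
open scoped ENNReal

open Filter Set
open scoped Topology

set_option maxHeartbeats 1000000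
set_option synthInstance.maxHeartbeats 400000


private lemma exists_median {α : Type*} [MeasurableSpace α] (μ : Measure α)
    [IsProbabilityMeasure μ] (g : α → ℝ) (hg : Measurable g) :
    ∃ m : ℝ, (1/2 : ℝ≥0∞) ≤ μ {x | m ≤ g x} ∧ (1/2 : ℝ≥0∞) ≤ μ {x | g x ≤ m} := by
  set S : Set ℝ := {t | (1/2 : ℝ≥0∞) ≤ μ {x | g x ≤ t}} with hS
  have hmono : ∀ {t u : ℝ}, t ≤ u → μ {x | g x ≤ t} ≤ μ {x | g x ≤ u} :=
    fun h => measure_mono (fun x hx => le_trans hx h)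
  -- S is nonempty
  have hSne : S.Nonempty := by
    have hU : Tendsto (fun k : ℕ => μ {x | g x ≤ (k : ℝ)}) atTop
        (𝓝 (μ (⋃ k : ℕ, {x | g x ≤ (k : ℝ)}))) := by
      refine tendsto_measure_iUnion_atTop (fun i j hij x hx => ?_)
      simp only [Set.mem_setOf_eq] at hx ⊢
      exact le_trans hx (by exact_mod_cast hij)
    have hUeq : (⋃ k : ℕ, {x | g x ≤ (k : ℝ)}) = Set.univ := by
      ext x
      simp only [Set.mem_iUnion, Set.mem_setOf_eq, Set.mem_univ, iff_true]
      exact exists_nat_ge (g x)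
    rw [hUeq, measure_univ] at hU
    have := hU.eventually_const_le (by norm_num : (1/2 : ℝ≥0∞) < 1)
    obtain ⟨k, hk⟩ := this.exists
    exact ⟨(k : ℝ), hk⟩
  -- S is bounded below
  have hSbdd : BddBelow S := by
    have hI : Tendsto (fun k : ℕ => μ {x | g x ≤ -(k : ℝ)}) atTop
        (𝓝 (μ (⋂ k : ℕ, {x | g x ≤ -(k : ℝ)}))) := by
      refine tendsto_measure_iInter_atTop
        (fun k => (hg measurableSet_Iic).nullMeasurableSet) ?_ ⟨0, measure_ne_top μ _⟩
      intro i j hij x hx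
      simp only [Set.mem_setOf_eq] at hx ⊢
      have : (i:ℝ) ≤ (j:ℝ) := by exact_mod_cast hij
      linarith
    have hIeq : (⋂ k : ℕ, {x | g x ≤ -(k : ℝ)}) = (∅ : Set α) := by
      ext x
      simp only [Set.mem_iInter, Set.mem_setOf_eq, Set.mem_empty_iff_false, iff_false, not_forall]
      obtain ⟨k, hk⟩ := exists_nat_gt (-g x)
      exact ⟨k, by push_neg; linarith⟩
    rw [hIeq, measure_empty] at hI
    have := hI.eventually_lt_const (by norm_num : (0:ℝ≥0∞) < 1/2)
    obtain ⟨k, hk⟩ := this.exists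
    refine ⟨-(k : ℝ), fun t ht => ?_⟩
    by_contra hlt
    push_neg at hlt
    exact absurd (le_trans ht (hmono hlt.le)) (not_le.mpr hk)
  set m := sInf S with hm
  refine ⟨m, ?_, ?_⟩
  · -- μ {m ≤ g} ≥ 1/2
    have hstep : ∀ k : ℕ, (1/2 : ℝ≥0∞) ≤ μ {x | m - 1/(k+1 : ℝ) < g x} := by
      intro k
      have hpos : (0:ℝ) < 1/(k+1 : ℝ) := by positivity
      have htS : (m - 1/(k+1 : ℝ)) ∉ S := by
        intro hmem
        have := csInf_le hSbdd hmem
        linarith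
    -- so μ {g ≤ t} < 1/2
      have hlt : μ {x | g x ≤ m - 1/(k+1 : ℝ)} < 1/2 := by
        by_contra hge
        exact htS (not_lt.mp hge)
      have hcompl : {x | m - 1/(k+1 : ℝ) < g x} = {x | g x ≤ m - 1/(k+1 : ℝ)}ᶜ := by
        ext x; simp [not_le]
      have hms : MeasurableSet {x | g x ≤ m - 1/(k+1 : ℝ)} := hg measurableSet_Iic
      rw [hcompl, measure_compl hms (measure_ne_top μ _), measure_univ]
      calc (1/2 : ℝ≥0∞) = 1 - 1/2 := by
            rw [ENNReal.sub_half (by norm_num)]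
        _ ≤ 1 - μ {x | g x ≤ m - 1/(k+1 : ℝ)} := tsub_le_tsub_left hlt.le 1
    have hI : Tendsto (fun k : ℕ => μ {x | m - 1/(k+1 : ℝ) < g x}) atTop
        (𝓝 (μ (⋂ k : ℕ, {x | m - 1/(k+1 : ℝ) < g x}))) := by
      refine tendsto_measure_iInter_atTop
        (fun k => (hg measurableSet_Ioi).nullMeasurableSet) ?_ ⟨0, measure_ne_top μ _⟩
      intro i j hij x hx
      have : 1/(j+1 : ℝ) ≤ 1/(i+1 : ℝ) := by
        apply one_div_le_one_div_of_le (by positivity)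
        have : (i:ℝ) ≤ (j:ℝ) := by exact_mod_cast hij
        linarith
      simp only [Set.mem_setOf_eq] at hx ⊢
      linarith
    have hIeq : (⋂ k : ℕ, {x | m - 1/(k+1 : ℝ) < g x}) = {x | m ≤ g x} := by
      ext x
      simp only [Set.mem_iInter, Set.mem_setOf_eq]
      constructor
      · intro h
        by_contra hlt
        push_neg at hlt
        obtain ⟨k, hk⟩ := exists_nat_one_div_lt (by linarith : (0:ℝ) < m - g x)
        have := h k
        linarith
      · intro h k
        have hpos : (0:ℝ) < 1/(k+1 : ℝ) := by positivity
        linarith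
    rw [hIeq] at hI
    exact ge_of_tendsto hI (Filter.Eventually.of_forall hstep)
  · -- μ {g ≤ m} ≥ 1/2
    have hstep : ∀ k : ℕ, (1/2 : ℝ≥0∞) ≤ μ {x | g x ≤ m + 1/(k+1 : ℝ)} := by
      intro k
      have hpos : (0:ℝ) < 1/(k+1 : ℝ) := by positivity
      obtain ⟨t, htS, htlt⟩ := (csInf_lt_iff hSbdd hSne).mp (by linarith : sInf S < m + 1/(k+1 : ℝ))
      exact le_trans htS (hmono htlt.le)
    have hI : Tendsto (fun k : ℕ => μ {x | g x ≤ m + 1/(k+1 : ℝ)}) atTop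
        (𝓝 (μ (⋂ k : ℕ, {x | g x ≤ m + 1/(k+1 : ℝ)}))) := by
      refine tendsto_measure_iInter_atTop
        (fun k => (hg measurableSet_Iic).nullMeasurableSet) ?_ ⟨0, measure_ne_top μ _⟩
      intro i j hij x hx
      have : 1/(j+1 : ℝ) ≤ 1/(i+1 : ℝ) := by
        apply one_div_le_one_div_of_le (by positivity)
        have : (i:ℝ) ≤ (j:ℝ) := by exact_mod_cast hij
        linarith
      simp only [Set.mem_setOf_eq] at hx ⊢
      linarith
    have hIeq : (⋂ k : ℕ, {x | g x ≤ m + 1/(k+1 : ℝ)}) = {x | g x ≤ m} := by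
      ext x
      simp only [Set.mem_iInter, Set.mem_setOf_eq]
      constructor
      · intro h
        by_contra hlt
        push_neg at hlt
        obtain ⟨k, hk⟩ := exists_nat_one_div_lt (by linarith : (0:ℝ) < g x - m)
        have := h k
        linarith
      · intro h k
        have hpos : (0:ℝ) < 1/(k+1 : ℝ) := by positivity
        linarith
    rw [hIeq] at hI
    exact ge_of_tendsto hI (Filter.Eventually.of_forall hstep)


private lemma cs_integral {α : Type*} [MeasurableSpace α] (μ : Measure α)
    (u v : α → ℝ) (hu : Integrable (fun x => u x ^ 2) μ)
    (hv : Integrable (fun x => v x ^ 2) μ) :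
    ∫ x, |u x| * |v x| ∂μ ≤ Real.sqrt (∫ x, u x ^ 2 ∂μ) * Real.sqrt (∫ x, v x ^ 2 ∂μ) := by
  set C := ∫ x, |u x| * |v x| ∂μ with hC
  set D := ∫ x, u x ^ 2 ∂μ with hD
  set I := ∫ x, v x ^ 2 ∂μ with hI
  have hD0 : 0 ≤ D := integral_nonneg fun x => sq_nonneg _
  have hI0 : 0 ≤ I := integral_nonneg fun x => sq_nonneg _
  have key : ∀ l : ℝ, 0 < l → C ≤ (l * D + I / l) / 2 := by
    intro l hl
    have hint : Integrable (fun x => (l * u x ^ 2 + v x ^ 2 / l) / 2) μ :=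
      ((hu.const_mul l).add (hv.div_const l)).div_const 2
    have hle : ∀ x, |u x| * |v x| ≤ (l * u x ^ 2 + v x ^ 2 / l) / 2 := by
      intro x
      have h1 : 0 ≤ (l * |u x| - |v x|) ^ 2 := sq_nonneg _
      have h2 : u x ^ 2 = |u x| ^ 2 := (sq_abs _).symm
      have h3 : v x ^ 2 = |v x| ^ 2 := (sq_abs _).symm
      have h4 : (l * |u x| - |v x|) ^ 2 / l ≥ 0 := by positivity
      rw [h2, h3]
      rw [ge_iff_le, le_div_iff₀ hl] at h4
      have hli : 0 < l⁻¹ := by positivity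
      rw [← sub_nonneg]
      have hexp : (l * |u x| ^ 2 + |v x| ^ 2 / l) / 2 - |u x| * |v x|
          = ((l * |u x| - |v x|) ^ 2 * l⁻¹) / 2 := by
        field_simp
        ring
      rw [hexp]
      positivity
    have := integral_mono_of_nonneg
      (Filter.Eventually.of_forall fun x => mul_nonneg (abs_nonneg _) (abs_nonneg _))
      hint (Filter.Eventually.of_forall hle)
    calc C ≤ ∫ x, (l * u x ^ 2 + v x ^ 2 / l) / 2 ∂μ := this
      _ = (l * D + I / l) / 2 := by
          rw [integral_div, integral_add (hu.const_mul l) (hv.div_const l),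
            integral_const_mul, integral_div]
  rcases eq_or_lt_of_le hD0 with hDz | hDpos
  · -- D = 0
    have hC0 : C ≤ 0 := by
      by_contra hc
      push_neg at hc
      have := key ((I + 1) / C) (by positivity)
      rw [← hDz] at this
      have h1 : I / ((I + 1) / C) = I * C / (I + 1) := by field_simp
      rw [mul_zero, zero_add, h1] at this
      have h2 : I * C / (I + 1) ≤ C := by
        rw [div_le_iff₀ (by positivity)]
        nlinarith
      linarith
    calc C ≤ 0 := hC0
      _ ≤ _ := by positivity
  rcases eq_or_lt_of_le hI0 with hIz | hIpos
  · have hC0 : C ≤ 0 := by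
      by_contra hc
      push_neg at hc
      have := key (C / ((D + 1))) (by positivity)
      rw [← hIz] at this
      have h1 : C / (D + 1) * D ≤ C * 1 := by
        rw [div_mul_eq_mul_div, div_le_iff₀ (by positivity)]
        nlinarith
      rw [zero_div, add_zero] at this
      nlinarith
    calc C ≤ 0 := hC0
      _ ≤ _ := by positivity
  · have hl : 0 < Real.sqrt I / Real.sqrt D := by
      apply div_pos (Real.sqrt_pos.mpr hIpos) (Real.sqrt_pos.mpr hDpos)
    have := key _ hl
    have hsD : Real.sqrt D ^ 2 = D := Real.sq_sqrt hD0
    have hsI : Real.sqrt I ^ 2 = I := Real.sq_sqrt hI0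
    have hsDpos : 0 < Real.sqrt D := Real.sqrt_pos.mpr hDpos
    have hsIpos : 0 < Real.sqrt I := Real.sqrt_pos.mpr hIpos
    have heq : (Real.sqrt I / Real.sqrt D * D + I / (Real.sqrt I / Real.sqrt D)) / 2
        = Real.sqrt D * Real.sqrt I := by
      field_simp
      nlinarith
    rw [heq] at this
    linarith


private lemma f_smooth_aux {n : ℕ} (a b : ℝ) (ha : 0 < a) (hb0 : 0 ≤ b) (m : ℝ)
    (g : EuclideanSpace ℝ (Fin n) → ℝ) (hg : ContDiff ℝ (⊤ : ℕ∞) g) :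
    ContDiff ℝ (⊤ : ℕ∞)
      (fun y : EuclideanSpace ℝ (Fin n) => (g y - m) * (Real.sqrt (a + b * ‖y‖ ^ 2))⁻¹) := by
  have hw0 : ∀ y : EuclideanSpace ℝ (Fin n), 0 < a + b * ‖y‖ ^ 2 := fun y =>
    add_pos_of_pos_of_nonneg ha (mul_nonneg hb0 (sq_nonneg _))
  rw [contDiff_iff_contDiffAt]
  intro y
  have hws : ContDiff ℝ (⊤ : ℕ∞) (fun y : EuclideanSpace ℝ (Fin n) => a + b * ‖y‖ ^ 2) :=
    contDiff_const.add (contDiff_const.mul (contDiff_norm_sq ℝ))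
  exact ((hg.contDiffAt.sub (contDiffAt_const (c := m))).mul
    ((hws.contDiffAt.sqrt (hw0 y).ne').inv (Real.sqrt_pos.mpr (hw0 y)).ne'))

private lemma grad_bounds_aux {n : ℕ} (a b : ℝ) (ha : 0 < a) (hb0 : 0 ≤ b) (m : ℝ)
    (g : EuclideanSpace ℝ (Fin n) → ℝ) (hg : ContDiff ℝ (⊤ : ℕ∞) g)
    (x : EuclideanSpace ℝ (Fin n)) :
    Real.sqrt (a + b * ‖x‖ ^ 2) *
        ‖gradient (fun y => (g y - m) * (Real.sqrt (a + b * ‖y‖ ^ 2))⁻¹) x‖ ≤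
      ‖gradient g x‖ + Real.sqrt b * |(g x - m) * (Real.sqrt (a + b * ‖x‖ ^ 2))⁻¹| ∧
    ‖gradient g x‖ ≤ Real.sqrt (a + b * ‖x‖ ^ 2) *
        ‖gradient (fun y => (g y - m) * (Real.sqrt (a + b * ‖y‖ ^ 2))⁻¹) x‖ +
      Real.sqrt b * |(g x - m) * (Real.sqrt (a + b * ‖x‖ ^ 2))⁻¹| := by
  have hw0 : ∀ y : EuclideanSpace ℝ (Fin n), 0 < a + b * ‖y‖ ^ 2 := fun y =>
    add_pos_of_pos_of_nonneg ha (mul_nonneg hb0 (sq_nonneg _))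
  set s : EuclideanSpace ℝ (Fin n) → ℝ := fun y => Real.sqrt (a + b * ‖y‖ ^ 2) with hsdef
  have hs0 : ∀ y, 0 < s y := fun y => Real.sqrt_pos.mpr (hw0 y)
  set f : EuclideanSpace ℝ (Fin n) → ℝ := fun y => (g y - m) * (s y)⁻¹ with hfdef
  -- derivative of w
  have hw' : HasFDerivAt (fun y : EuclideanSpace ℝ (Fin n) => a + b * ‖y‖ ^ 2)
      ((b * 2) • innerSL ℝ x) x := by
    have h1 : HasFDerivAt (fun y : EuclideanSpace ℝ (Fin n) => ‖y‖ ^ 2)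
        (2 • innerSL ℝ x) x := by
      simpa using (hasFDerivAt_id x).norm_sq
    have h2 := (h1.const_mul b).const_add a
    have heq : (b • (2 • innerSL ℝ x) : EuclideanSpace ℝ (Fin n) →L[ℝ] ℝ)
        = (b * 2) • innerSL ℝ x := by
      ext y
      simp [smul_eq_mul]
      ring
    rwa [heq] at h2
  -- derivative of s⁻¹
  have hsqrt : HasDerivAt Real.sqrt (1 / (2 * s x)) (a + b * ‖x‖ ^ 2) :=
    Real.hasDerivAt_sqrt (hw0 x).ne'
  have hinv1 : HasDerivAt (fun r : ℝ => (Real.sqrt r)⁻¹)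
      (-(1 / (2 * s x)) / s x ^ 2) (a + b * ‖x‖ ^ 2) := hsqrt.inv (hs0 x).ne'
  have hDs : HasFDerivAt (fun y : EuclideanSpace ℝ (Fin n) => (s y)⁻¹)
      ((-(1 / (2 * s x)) / s x ^ 2) • ((b * 2) • innerSL ℝ x)) x :=
    by have := hinv1.comp_hasFDerivAt x hw'; exact this
  -- derivative of f
  have hgx : HasFDerivAt g (fderiv ℝ g x) x :=
    (hg.differentiable (by simp) x).hasFDerivAt
  have hDf : HasFDerivAt f
      ((g x - m) • ((-(1 / (2 * s x)) / s x ^ 2) • ((b * 2) • innerSL ℝ x))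
        + (s x)⁻¹ • fderiv ℝ g x) x :=
    (hgx.sub_const m).mul hDs
  -- notation
  set t := Real.sqrt b with htdef
  have ht0 : 0 ≤ t := Real.sqrt_nonneg b
  have ht2 : t ^ 2 = b := Real.sq_sqrt hb0
  have hgrad : ∀ (h : EuclideanSpace ℝ (Fin n) → ℝ) (y : EuclideanSpace ℝ (Fin n)),
      ‖gradient h y‖ = ‖fderiv ℝ h y‖ :=
    fun h y => (InnerProductSpace.toDual ℝ _).symm.norm_map _
  have hfd := hDf.fderiv
  set A := (g x - m) • ((-(1 / (2 * s x)) / s x ^ 2) • ((b * 2) • innerSL ℝ x)) with hAdef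
  set G := |g x - m| with hGdef
  set X := ‖x‖ with hXdef
  set S := s x with hSdef
  set P := ‖fderiv ℝ g x‖ with hPdef
  set Q := ‖fderiv ℝ f x‖ with hQdef
  have hSpos : 0 < S := hs0 x
  have hS2 : S ^ 2 = a + b * X ^ 2 := Real.sq_sqrt (hw0 x).le
  have hkey : b * X ≤ t * S := by
    have h1 : (t * X) ^ 2 ≤ S ^ 2 := by
      rw [hS2, mul_pow, ht2]
      nlinarith [sq_nonneg X]
    have h2 : t * X ≤ S := by
      nlinarith [h1, hSpos, mul_nonneg ht0 (norm_nonneg x)]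
    calc b * X = t * (t * X) := by rw [← ht2]; ring
      _ ≤ t * S := by exact mul_le_mul_of_nonneg_left h2 ht0
  have hAnorm : ‖A‖ = G * b * X / S ^ 3 := by
    rw [hAdef]
    rw [norm_smul (r := g x - m) (x := (-(1 / (2 * S)) / S ^ 2) • ((b * 2) • innerSL ℝ x)),
      norm_smul (r := -(1 / (2 * S)) / S ^ 2) (x := (b * 2) • innerSL ℝ x),
      norm_smul (r := b * 2) (x := innerSL ℝ x), innerSL_apply_norm]
    simp only [Real.norm_eq_abs]
    rw [abs_div, abs_neg, abs_of_pos (div_pos one_pos (by linarith : (0:ℝ) < 2 * S)),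
      abs_of_pos (by positivity : (0:ℝ) < S ^ 2),
      abs_of_nonneg (by linarith : (0:ℝ) ≤ b * 2)]
    field_simp
    ring
  have hfabs : |f x| = G / S := by
    have hfx : f x = (g x - m) * (s x)⁻¹ := rfl
    rw [hfx, abs_mul, abs_inv, abs_of_pos hSpos]
    exact (div_eq_mul_inv _ _).symm
  have hsmul : ‖S⁻¹ • fderiv ℝ g x‖ = S⁻¹ * P := by
    rw [norm_smul (r := S⁻¹) (x := fderiv ℝ g x), Real.norm_eq_abs, abs_inv, abs_of_pos hSpos]
  have hQ1 : Q ≤ ‖A‖ + S⁻¹ * P := by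
    rw [hQdef, hfd]
    exact le_trans (norm_add_le _ _) (by rw [hsmul])
  have hQ2 : S⁻¹ * P ≤ Q + ‖A‖ := by
    have heq : (S⁻¹ • fderiv ℝ g x) = fderiv ℝ f x - A := by rw [hfd]; abel
    calc S⁻¹ * P = ‖S⁻¹ • fderiv ℝ g x‖ := hsmul.symm
      _ = ‖fderiv ℝ f x - A‖ := by rw [heq]
      _ ≤ Q + ‖A‖ := norm_sub_le _ _
  have hG0 : 0 ≤ G := abs_nonneg _
  have hSA : S * ‖A‖ ≤ t * (G / S) := by
    rw [hAnorm]
    have e1 : S * (G * b * X / S ^ 3) = G * (b * X) / S ^ 2 := by field_simp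
    have e2 : G * (b * X) / S ^ 2 ≤ G * (t * S) / S ^ 2 := by gcongr
    have e3 : G * (t * S) / S ^ 2 = t * (G / S) := by field_simp
    linarith
  have hA1 : S * Q ≤ P + t * |f x| := by
    rw [hfabs]
    have h1 : S * Q ≤ S * ‖A‖ + S * (S⁻¹ * P) := by nlinarith [hSpos]
    have h2 : S * (S⁻¹ * P) = P := by field_simp
    linarith
  have hB1 : P ≤ S * Q + t * |f x| := by
    rw [hfabs]
    have h1 : S * (S⁻¹ * P) = P := by field_simp
    have h2 : S * (S⁻¹ * P) ≤ S * Q + S * ‖A‖ := by nlinarith [hSpos]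
    linarith
  constructor
  · rw [hgrad f x, hgrad g x]
    exact hA1
  · rw [hgrad f x, hgrad g x]
    exact hB1


/-- **Proposition 3.3**: assume the probability measure `μ` on `ℝⁿ` satisfies the
weighted Poincaré-type inequality around medians
`∫ |g − m|² dμ ≤ ∫ |∇g|² (a + b|x|²) dμ` (for smooth `g` with `μ`-median `m`),
with constants `a > 0` and `0 ≤ b < 1`.  Then for any smooth `g`,
`inf_c ∫ |g − c|²/(a + b|x|²) dμ ≤ (1/(1 − √b)²) ∫ |∇g|² dμ`. -/
theorem weighted_poincare_median_implies_reversed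
    {n : ℕ} (μ : Measure (EuclideanSpace ℝ (Fin n))) (hμp : IsProbabilityMeasure μ)
    (a b : ℝ) (ha : 0 < a) (hb0 : 0 ≤ b) (hb1 : b < 1)
    (H : ∀ g : EuclideanSpace ℝ (Fin n) → ℝ, ContDiff ℝ (⊤ : ℕ∞) g →
      ∀ m : ℝ, (1 / 2 : ℝ≥0∞) ≤ μ {x | m ≤ g x} → (1 / 2 : ℝ≥0∞) ≤ μ {x | g x ≤ m} →
        ∫ x, (g x - m) ^ 2 ∂μ ≤ ∫ x, ‖gradient g x‖ ^ 2 * (a + b * ‖x‖ ^ 2) ∂μ)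
    (g : EuclideanSpace ℝ (Fin n) → ℝ) (hg : ContDiff ℝ (⊤ : ℕ∞) g) :
    (⨅ c : ℝ, ∫ x, (g x - c) ^ 2 / (a + b * ‖x‖ ^ 2) ∂μ) ≤
      (1 / (1 - Real.sqrt b) ^ 2) * ∫ x, ‖gradient g x‖ ^ 2 ∂μ := by
  obtain ⟨m, hm1, hm2⟩ := exists_median μ g hg.continuous.measurable
  have hw0 : ∀ y : EuclideanSpace ℝ (Fin n), 0 < a + b * ‖y‖ ^ 2 := fun y =>
    add_pos_of_pos_of_nonneg ha (mul_nonneg hb0 (sq_nonneg _))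
  set t := Real.sqrt b with htdef
  have ht0 : 0 ≤ t := Real.sqrt_nonneg b
  have ht2 : t ^ 2 = b := Real.sq_sqrt hb0
  have ht1 : t < 1 := by nlinarith [ht0, ht2]
  have h1t : 0 < 1 - t := by linarith
  set f : EuclideanSpace ℝ (Fin n) → ℝ :=
    fun y => (g y - m) * (Real.sqrt (a + b * ‖y‖ ^ 2))⁻¹ with hfdef
  have hf_smooth : ContDiff ℝ (⊤ : ℕ∞) f := f_smooth_aux a b ha hb0 m g hg
  have hfsq : ∀ x, f x ^ 2 = (g x - m) ^ 2 / (a + b * ‖x‖ ^ 2) := by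
    intro x
    have hfx : f x = (g x - m) * (Real.sqrt (a + b * ‖x‖ ^ 2))⁻¹ := rfl
    rw [hfx, mul_pow, inv_pow, Real.sq_sqrt (hw0 x).le, div_eq_mul_inv]
  -- median of f is 0
  have hprod : ∀ x, f x * Real.sqrt (a + b * ‖x‖ ^ 2) = g x - m := by
    intro x
    have hfx : f x = (g x - m) * (Real.sqrt (a + b * ‖x‖ ^ 2))⁻¹ := rfl
    rw [hfx]
    field_simp
  have hset1 : {x : EuclideanSpace ℝ (Fin n) | (0:ℝ) ≤ f x} = {x | m ≤ g x} := by
    ext x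
    simp only [Set.mem_setOf_eq]
    constructor
    · intro h
      have h4 := mul_nonneg h (Real.sqrt_nonneg (a + b * ‖x‖ ^ 2))
      rw [hprod x] at h4
      linarith
    · intro h
      exact mul_nonneg (by linarith) (inv_nonneg.mpr (Real.sqrt_nonneg _))
  have hset2 : {x : EuclideanSpace ℝ (Fin n) | f x ≤ (0:ℝ)} = {x | g x ≤ m} := by
    ext x
    simp only [Set.mem_setOf_eq]
    constructor
    · intro h
      have h4 := mul_nonneg (neg_nonneg.mpr h) (Real.sqrt_nonneg (a + b * ‖x‖ ^ 2))
      have h5 := hprod x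
      nlinarith [h4, h5]
    · intro h
      exact mul_nonpos_of_nonpos_of_nonneg (by linarith) (inv_nonneg.mpr (Real.sqrt_nonneg _))
  have hH := H f hf_smooth 0 (by rw [hset1]; exact hm1) (by rw [hset2]; exact hm2)
  simp only [sub_zero] at hH
  -- inf is at most the value at c = m
  have hbdd : BddBelow (Set.range fun c : ℝ => ∫ x, (g x - c) ^ 2 / (a + b * ‖x‖ ^ 2) ∂μ) := by
    refine ⟨0, ?_⟩
    rintro r ⟨c, rfl⟩
    exact integral_nonneg fun x => div_nonneg (sq_nonneg _) (hw0 x).le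
  have hinf_le : (⨅ c : ℝ, ∫ x, (g x - c) ^ 2 / (a + b * ‖x‖ ^ 2) ∂μ) ≤ ∫ x, f x ^ 2 ∂μ := by
    refine le_trans (ciInf_le hbdd m) (le_of_eq ?_)
    exact integral_congr_ae (Filter.Eventually.of_forall fun x => (hfsq x).symm)
  have hRHS0 : 0 ≤ (1 / (1 - t) ^ 2) * ∫ x, ‖gradient g x‖ ^ 2 ∂μ :=
    mul_nonneg (by positivity) (integral_nonneg fun x => sq_nonneg _)
  by_cases hI : Integrable (fun x => f x ^ 2) μ
  swap
  · exact le_trans (hinf_le.trans (le_of_eq (integral_undef hI))) hRHS0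
  by_cases hR : Integrable (fun x => ‖gradient f x‖ ^ 2 * (a + b * ‖x‖ ^ 2)) μ
  swap
  · have h0 : (∫ x, f x ^ 2 ∂μ) ≤ 0 := hH.trans_eq (integral_undef hR)
    exact le_trans (hinf_le.trans h0) hRHS0
  -- main case
  have hgb := fun x => grad_bounds_aux a b ha hb0 m g hg x
  have hcontgrad : ∀ h : EuclideanSpace ℝ (Fin n) → ℝ, ContDiff ℝ (⊤ : ℕ∞) h →
      Continuous (fun x => ‖gradient h x‖) := by
    intro h hh
    have h1 : Continuous (fderiv ℝ h) := hh.continuous_fderiv (by simp)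
    exact continuous_norm.comp
      (((InnerProductSpace.toDual ℝ (EuclideanSpace ℝ (Fin n))).symm.continuous).comp h1)
  -- integrability of ‖∇g‖²
  have hDg2 : Integrable (fun x => ‖gradient g x‖ ^ 2) μ := by
    refine Integrable.mono' ((hR.const_mul 2).add (hI.const_mul (2 * b))) ?_ ?_
    · exact (((hcontgrad g hg).pow 2).aestronglyMeasurable)
    · refine Filter.Eventually.of_forall fun x => ?_
      dsimp only [Pi.add_apply]
      rw [Real.norm_eq_abs, abs_of_nonneg (sq_nonneg _)]
      have hb2 := (hgb x).2
      rw [← hfdef] at hb2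
      have hsq : Real.sqrt (a + b * ‖x‖ ^ 2) ^ 2 = a + b * ‖x‖ ^ 2 := Real.sq_sqrt (hw0 x).le
      have hfx : f x = (g x - m) * (Real.sqrt (a + b * ‖x‖ ^ 2))⁻¹ := rfl
      rw [← hfx] at hb2
      have hsqb := mul_self_le_mul_self (norm_nonneg (gradient g x)) hb2
      nlinarith [hsqb, sq_abs (f x), hsq, ht2,
        sq_nonneg (Real.sqrt (a + b * ‖x‖ ^ 2) * ‖gradient f x‖ - t * |f x|),
        mul_nonneg (Real.sqrt_nonneg (a + b * ‖x‖ ^ 2)) (norm_nonneg (gradient f x)),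
        mul_nonneg ht0 (abs_nonneg (f x))]
  -- integrability of the cross term
  have hcross : Integrable (fun x => ‖gradient g x‖ * |f x|) μ := by
    refine Integrable.mono' ((hDg2.add hI).div_const 2) ?_ ?_
    · exact ((hcontgrad g hg).mul (continuous_abs.comp hf_smooth.continuous)).aestronglyMeasurable
    · refine Filter.Eventually.of_forall fun x => ?_
      dsimp only [Pi.add_apply]
      rw [Real.norm_eq_abs, abs_of_nonneg (mul_nonneg (norm_nonneg _) (abs_nonneg _))]
      nlinarith [sq_nonneg (‖gradient g x‖ - |f x|), sq_abs (f x)]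
  have hsum : Integrable (fun x => ‖gradient g x‖ ^ 2
      + ((2 * t) * (‖gradient g x‖ * |f x|) + b * f x ^ 2)) μ :=
    hDg2.add ((hcross.const_mul (2 * t)).add (hI.const_mul b))
  have step1 : (∫ x, ‖gradient f x‖ ^ 2 * (a + b * ‖x‖ ^ 2) ∂μ)
      ≤ ∫ x, (‖gradient g x‖ ^ 2
        + ((2 * t) * (‖gradient g x‖ * |f x|) + b * f x ^ 2)) ∂μ := by
    refine integral_mono_of_nonneg
      (Filter.Eventually.of_forall fun x => mul_nonneg (sq_nonneg _) (hw0 x).le) hsum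
      (Filter.Eventually.of_forall fun x => ?_)
    dsimp only
    have hb1' := (hgb x).1
    rw [← hfdef] at hb1'
    have hsq : Real.sqrt (a + b * ‖x‖ ^ 2) ^ 2 = a + b * ‖x‖ ^ 2 := Real.sq_sqrt (hw0 x).le
    have hfx : f x = (g x - m) * (Real.sqrt (a + b * ‖x‖ ^ 2))⁻¹ := rfl
    rw [← hfx] at hb1'
    have hsqa := mul_self_le_mul_self
      (mul_nonneg (Real.sqrt_nonneg (a + b * ‖x‖ ^ 2)) (norm_nonneg (gradient f x))) hb1'
    nlinarith [hsqa, hsq, ht2, sq_abs (f x)]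
  have step2 : (∫ x, (‖gradient g x‖ ^ 2
        + ((2 * t) * (‖gradient g x‖ * |f x|) + b * f x ^ 2)) ∂μ)
      = (∫ x, ‖gradient g x‖ ^ 2 ∂μ)
        + ((2 * t) * (∫ x, ‖gradient g x‖ * |f x| ∂μ) + b * ∫ x, f x ^ 2 ∂μ) := by
    have hBC : Integrable (fun x => (2 * t) * (‖gradient g x‖ * |f x|) + b * f x ^ 2) μ :=
      (hcross.const_mul (2 * t)).add (hI.const_mul b)
    have hB' : Integrable (fun x => (2 * t) * (‖gradient g x‖ * |f x|)) μ :=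
      hcross.const_mul (2 * t)
    have hC' : Integrable (fun x => b * f x ^ 2) μ := hI.const_mul b
    rw [integral_add hDg2 hBC, integral_add hB' hC', integral_const_mul, integral_const_mul]
  have hCS : (∫ x, ‖gradient g x‖ * |f x| ∂μ)
      ≤ Real.sqrt (∫ x, ‖gradient g x‖ ^ 2 ∂μ) * Real.sqrt (∫ x, f x ^ 2 ∂μ) := by
    have h1 := cs_integral μ (fun x => ‖gradient g x‖) f hDg2 hI
    have h2 : (fun x => |‖gradient g x‖| * |f x|) = fun x => ‖gradient g x‖ * |f x| :=
      funext fun x => by rw [abs_norm]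
    rwa [h2] at h1
  set I := ∫ x, f x ^ 2 ∂μ with hIdef
  set D2 := ∫ x, ‖gradient g x‖ ^ 2 ∂μ with hD2def
  set C := ∫ x, ‖gradient g x‖ * |f x| ∂μ with hCdef
  have hI0 : 0 ≤ I := integral_nonneg fun x => sq_nonneg _
  have hD20 : 0 ≤ D2 := integral_nonneg fun x => sq_nonneg _
  have hC0 : 0 ≤ C := integral_nonneg fun x => mul_nonneg (norm_nonneg _) (abs_nonneg _)
  set ii := Real.sqrt I with hiidef
  set dd := Real.sqrt D2 with hdddef
  have hii : ii ^ 2 = I := Real.sq_sqrt hI0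
  have hdd : dd ^ 2 = D2 := Real.sq_sqrt hD20
  have hii0 : 0 ≤ ii := Real.sqrt_nonneg _
  have hdd0 : 0 ≤ dd := Real.sqrt_nonneg _
  have hmain : I ≤ D2 + (2 * t * (dd * ii) + b * I) := by
    have h1 : I ≤ D2 + (2 * t * C + b * I) := le_trans hH (step1.trans_eq step2)
    have h2 : 2 * t * C ≤ 2 * t * (dd * ii) :=
      mul_le_mul_of_nonneg_left hCS (by positivity)
    linarith
  have hIled : I ≤ (dd + t * ii) ^ 2 := by nlinarith [hmain, ht2]
  have hile : ii ≤ dd + t * ii := by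
    have h0 : (0:ℝ) ≤ dd + t * ii := by positivity
    calc ii = Real.sqrt I := rfl
      _ ≤ Real.sqrt ((dd + t * ii) ^ 2) := Real.sqrt_le_sqrt hIled
      _ = dd + t * ii := Real.sqrt_sq h0
  have hfin : (1 - t) * ii ≤ dd := by linarith
  have h4 : (1 - t) ^ 2 * I ≤ D2 := by
    have h4' := mul_self_le_mul_self (mul_nonneg h1t.le hii0) hfin
    nlinarith [h4', hii, hdd]
  have h5 : I ≤ 1 / (1 - t) ^ 2 * D2 := by
    rw [div_mul_eq_mul_div, le_div_iff₀ (by positivity)]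
    linarith
  exact hinf_le.trans h5
end
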